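/- Let (D, ≤, u) be a dimension group of rank at least 2 and Φ an order-preserving automorphism of D with Φ(u) = q·u for a positive rational q. If there exists a nonzero d ∈ D with Φ(d) = d, then q = 1. -/

import Mathlib

/-- `q • u ≥ d` for a rational `q`, interpreted by clearing denominators: for every
representation `q = a / b` with `b > 0` we have `b • d ≤ a • u`. -/
def ratGe {D : Type*} [AddCommGroup D] [PartialOrder D] (u d : D) (q : ℚ) : Prop :=
  ∀ a b : ℤ, 0 < b → q = (a : ℚ) / (b : ℚ) → b • d ≤ a • u

/-- `q • u ≤ d` for a rational `q`, interpreted by clearing denominators. -/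
def ratLe {D : Type*} [AddCommGroup D] [PartialOrder D] (u d : D) (q : ℚ) : Prop :=
  ∀ a b : ℤ, 0 < b → q = (a : ℚ) / (b : ℚ) → a • u ≤ b • d

/-- A dimension group: a countable partially ordered abelian group (translation
invariant order) with order unit `u`, in which every finite subset is contained in a
subgroup order-isomorphic to a finite direct power of `(ℤ, ≤)`. -/
structure IsDimensionGroup (D : Type*) [AddCommGroup D] [PartialOrder D] (u : D) : Prop where
  add_le_add : ∀ a b c : D, a ≤ b → a + c ≤ b + c
  countable : Countable D
  unit_nonneg : 0 ≤ u
  unit_arch : ∀ x : D, ∃ n : ℕ, 0 < n ∧ x ≤ (n : ℤ) • u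
  locallyZ : ∀ s : Finset D, ∃ (k : ℕ) (S : AddSubgroup D) (e : S ≃+ (Fin k → ℤ)),
    (∀ x ∈ s, x ∈ S) ∧ ∀ a b : S, a ≤ b ↔ e a ≤ e b

lemma exists_pow_lt_aux (c p m : ℕ) (hp : 0 < p) (hpm : p < m) : ∃ K, c * p ^ K < m ^ K := by
  have hpq : (0 : ℚ) < p := by exact_mod_cast hp
  have h1 : (1 : ℚ) < (m : ℚ) / p := by
    rw [lt_div_iff₀ hpq]; exact_mod_cast by simpa using hpm
  obtain ⟨K, hK⟩ := pow_unbounded_of_one_lt (R := ℚ) (c : ℚ) h1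
  refine ⟨K, ?_⟩
  rw [div_pow] at hK
  have hpK : (0 : ℚ) < (p : ℚ) ^ K := by positivity
  have : (c : ℚ) * p ^ K < m ^ K := by
    rw [lt_div_iff₀ hpK] at hK; exact hK
  exact_mod_cast this

lemma core_fixed_zero {D : Type*} [AddCommGroup D] [PartialOrder D] {u : D}
    (h : IsDimensionGroup D u)
    (Ψ : D ≃+ D) (hord : ∀ x y : D, x ≤ y ↔ Ψ x ≤ Ψ y)
    (p m : ℕ) (hp : 0 < p) (hpm : p < m)
    (hΨu : (m : ℤ) • Ψ u = (p : ℤ) • u)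
    (d : D) (hfix : Ψ d = d) : d = 0 := by
  have haddr : ∀ a b c : D, a ≤ b → a + c ≤ b + c := h.add_le_add
  have haddl : ∀ a b c : D, a ≤ b → c + a ≤ c + b := by
    intro a b c hab; simpa [add_comm] using haddr a b c hab
  have hsmul : ∀ (c : ℕ) (x y : D), x ≤ y → c • x ≤ c • y := by
    intro c x y hxy
    induction c with
    | zero => simp
    | succ k ih =>
      have h1 : k • x + x ≤ k • y + x := haddr _ _ _ ih
      have h2 : k • y + x ≤ k • y + y := haddl _ _ _ hxy
      simpa [succ_nsmul] using h1.trans h2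
  have hiter : ∀ (K : ℕ) (x y : D), x ≤ y → Ψ^[K] x ≤ Ψ^[K] y := by
    intro K
    induction K with
    | zero => simp
    | succ k ih =>
      intro x y hxy
      rw [Function.iterate_succ_apply', Function.iterate_succ_apply']
      exact (hord _ _).mp (ih _ _ hxy)
  have hiter_smul : ∀ (K : ℕ) (c : ℤ) (x : D), Ψ^[K] (c • x) = c • Ψ^[K] x := by
    intro K
    induction K with
    | zero => simp
    | succ k ih =>
      intro c x
      rw [Function.iterate_succ_apply', Function.iterate_succ_apply', ih, map_zsmul]
  have hu : ∀ K : ℕ, ((m : ℤ) ^ K) • Ψ^[K] u = ((p : ℤ) ^ K) • u := by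
    intro K
    induction K with
    | zero => simp
    | succ k ih =>
      calc ((m : ℤ)) ^ (k + 1) • (⇑Ψ)^[k + 1] u
          = (m : ℤ) • Ψ ((m : ℤ) ^ k • (⇑Ψ)^[k] u) := by
            rw [Function.iterate_succ_apply', pow_succ', mul_smul, ← map_zsmul]
        _ = (m : ℤ) • ((p : ℤ) ^ k • Ψ u) := by rw [ih, map_zsmul]
        _ = (p : ℤ) ^ k • ((m : ℤ) • Ψ u) := smul_comm _ _ _
        _ = (p : ℤ) ^ k • ((p : ℤ) • u) := by rw [hΨu]
        _ = (p : ℤ) ^ (k + 1) • u := by rw [← mul_smul, ← pow_succ]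
  -- key inequality
  have key : ∀ (x : D), Ψ x = x → ∀ n K : ℕ, x ≤ (n : ℤ) • u →
      (m ^ K) • x ≤ (n * p ^ K) • u := by
    intro x hx n K hxu
    have h1 : x ≤ (n : ℤ) • Ψ^[K] u := by
      have := hiter K _ _ hxu
      rwa [Function.iterate_fixed hx, hiter_smul] at this
    have h2 : (m ^ K) • x ≤ (m ^ K) • ((n : ℤ) • Ψ^[K] u) := hsmul _ _ _ h1
    have h3 : (m ^ K) • ((n : ℤ) • (⇑Ψ)^[K] u) = (n * p ^ K) • u := by
      rw [← natCast_zsmul ((n:ℤ) • (⇑Ψ)^[K] u) (m ^ K), ← natCast_zsmul u (n * p ^ K)]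
      push_cast
      rw [smul_comm, hu K, ← mul_smul]
    rwa [h3] at h2
  -- local Z structure
  classical
  obtain ⟨k, S, e, hmem, hordS⟩ := h.locallyZ {d, u}
  have hdS : d ∈ S := hmem d (by simp)
  have huS : u ∈ S := hmem u (by simp)
  set dS : S := ⟨d, hdS⟩
  set uS : S := ⟨u, huS⟩
  set X : Fin k → ℤ := e dS with hX
  set U : Fin k → ℤ := e uS with hU
  have hUpos : ∀ i, 0 ≤ U i := by
    have h0 : (0 : S) ≤ uS := by
      rw [← Subtype.coe_le_coe]; exact h.unit_nonneg
    have := (hordS 0 uS).mp h0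
    rw [map_zero] at this
    intro i; exact this i
  -- transfer of nsmul inequalities
  have htrans : ∀ (x : D) (hxS : x ∈ S) (a b : ℕ), b • x ≤ a • u →
      ∀ i, (b : ℤ) * (e ⟨x, hxS⟩) i ≤ (a : ℤ) * U i := by
    intro x hxS a b hle i
    have h1 : (b • (⟨x, hxS⟩ : S)) ≤ a • uS := by
      rw [← Subtype.coe_le_coe]
      push_cast
      exact hle
    have h2 := (hordS _ _).mp h1
    rw [map_nsmul, map_nsmul] at h2
    have h4 := h2 i
    simpa [nsmul_eq_mul, hU] using h4
  obtain ⟨n1, hn1, hdu⟩ := h.unit_arch d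
  obtain ⟨n2, hn2, hdu'⟩ := h.unit_arch (-d)
  have hfix' : Ψ (-d) = -d := by rw [map_neg, hfix]
  have hXzero : ∀ i, X i = 0 := by
    intro i
    have hUi := hUpos i
    -- upper bound : X i ≤ 0
    have hle1 : X i ≤ 0 := by
      obtain ⟨K, hK⟩ := exists_pow_lt_aux (n1 * (U i).toNat) p m hp hpm
      have hb := key d hfix n1 K hdu
      have := htrans d hdS (n1 * p ^ K) (m ^ K) hb i
      by_contra hpos
      push_neg at hpos
      have hx1 : (1 : ℤ) ≤ X i := hpos
      have hm : (0:ℤ) < (m:ℤ) ^ K := pow_pos (by exact_mod_cast hp.trans hpm) K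
      have hlt : ((n1 * p ^ K : ℕ) : ℤ) * U i < (m : ℤ) ^ K := by
        have h2 : ((n1 * p ^ K : ℕ) : ℤ) * U i = ((n1 * (U i).toNat * p ^ K : ℕ) : ℤ) := by
          push_cast
          rw [Int.toNat_of_nonneg hUi]
          ring
        rw [h2]
        calc ((n1 * (U i).toNat * p ^ K : ℕ) : ℤ) < ((m ^ K : ℕ) : ℤ) := by exact_mod_cast hK
          _ = (m : ℤ) ^ K := by push_cast; ring
      have hge : ((m ^ K : ℕ) : ℤ) ≤ ((m ^ K : ℕ) : ℤ) * X i :=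
        le_mul_of_one_le_right (Int.natCast_nonneg _) hx1
      have : ((m ^ K : ℕ) : ℤ) ≤ ((n1 * p ^ K : ℕ) : ℤ) * U i := hge.trans this
      rw [show ((m ^ K : ℕ) : ℤ) = (m:ℤ) ^ K by push_cast; ring] at this
      omega
    -- lower bound : 0 ≤ X i
    have hle2 : 0 ≤ X i := by
      obtain ⟨K, hK⟩ := exists_pow_lt_aux (n2 * (U i).toNat) p m hp hpm
      have hb := key (-d) hfix' n2 K hdu'
      have hmemneg : -d ∈ S := S.neg_mem hdS
      have := htrans (-d) hmemneg (n2 * p ^ K) (m ^ K) hb i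
      have hneg : (e ⟨-d, hmemneg⟩) i = - X i := by
        have : (⟨-d, hmemneg⟩ : S) = -dS := rfl
        rw [this, map_neg]
        rfl
      rw [hneg] at this
      by_contra hpos
      push_neg at hpos
      have hx1 : (1 : ℤ) ≤ -X i := by omega
      have hlt : ((n2 * p ^ K : ℕ) : ℤ) * U i < (m : ℤ) ^ K := by
        have h2 : ((n2 * p ^ K : ℕ) : ℤ) * U i = ((n2 * (U i).toNat * p ^ K : ℕ) : ℤ) := by
          push_cast
          rw [Int.toNat_of_nonneg hUi]
          ring
        rw [h2]
        calc ((n2 * (U i).toNat * p ^ K : ℕ) : ℤ) < ((m ^ K : ℕ) : ℤ) := by exact_mod_cast hK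
          _ = (m : ℤ) ^ K := by push_cast; ring
      have hge : ((m ^ K : ℕ) : ℤ) ≤ ((m ^ K : ℕ) : ℤ) * (-X i) :=
        le_mul_of_one_le_right (Int.natCast_nonneg _) hx1
      have h3 : ((m ^ K : ℕ) : ℤ) * (-X i) ≤ ((n2 * p ^ K : ℕ) : ℤ) * U i := this
      have := hge.trans h3
      rw [show ((m ^ K : ℕ) : ℤ) = (m:ℤ) ^ K by push_cast; ring] at this
      omega
    omega
  have hX0 : X = 0 := funext fun i => hXzero i
  have hdS0 : dS = 0 := by
    apply e.injective
    rw [map_zero, ← hX, hX0]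
  exact congrArg Subtype.val hdS0

/-- In a dimension group of rank at least 2, an order-preserving
automorphism `Φ` with `Φ u = q • u` (`q` a positive rational) fixing some nonzero
element must have `q = 1`. -/
theorem stmt15 {D : Type*} [AddCommGroup D] [PartialOrder D] (u : D)
    (h : IsDimensionGroup D u)
    (hrank : ∃ f : Fin 2 → D, LinearIndependent ℤ f)
    (Φ : D ≃+ D) (hord : ∀ x y : D, x ≤ y ↔ Φ x ≤ Φ y)
    (q : ℚ) (hq : 0 < q) (hΦu : (q.den : ℤ) • Φ u = q.num • u)
    (d : D) (hd : d ≠ 0) (hfix : Φ d = d) : q = 1 := by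
  have hnum : 0 < q.num := Rat.num_pos.mpr hq
  set p : ℕ := q.num.toNat with hp
  have hpcast : (p : ℤ) = q.num := Int.toNat_of_nonneg hnum.le
  have hppos : 0 < p := by omega
  have hdpos : 0 < q.den := q.pos
  rcases lt_trichotomy p q.den with hlt | heq | hgt
  · exfalso
    exact hd (core_fixed_zero h Φ hord p q.den hppos hlt (by rw [hpcast]; exact hΦu) d hfix)
  · -- p = q.den means num = den, so q = 1
    have : q.num = (q.den : ℤ) := by omega
    have hden : ((q.den : ℤ) : ℚ) = (q.den : ℚ) := by push_cast; ring
    rw [← Rat.num_div_den q, this, hden, div_self (by exact_mod_cast hdpos.ne')]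
  · exfalso
    have hord' : ∀ x y : D, x ≤ y ↔ Φ.symm x ≤ Φ.symm y := by
      intro x y
      conv_lhs => rw [show x = Φ (Φ.symm x) from (Φ.apply_symm_apply x).symm,
        show y = Φ (Φ.symm y) from (Φ.apply_symm_apply y).symm]
      exact (hord _ _).symm
    have hΨu : (p : ℤ) • Φ.symm u = (q.den : ℤ) • u := by
      have := congrArg Φ.symm hΦu
      rw [map_zsmul, map_zsmul, Φ.symm_apply_apply] at this
      rw [hpcast]
      exact this.symm
    have hfix' : Φ.symm d = d := by
      conv_lhs => rw [← hfix]
      exact Φ.symm_apply_apply d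
    exact hd (core_fixed_zero h Φ.symm hord' q.den p hdpos hgt hΨu d hfix')
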